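/- Let 𝕋 be a triangulated category, (𝒫, ℐ) and (𝒫′, ℐ′) projective classes on 𝕋 with 𝒫′ ⊆ 𝒫. Suppose M ∈ 𝕋 satisfies len_{𝒫′}(M) = len_{𝒫}(M) = m, and there is a distinguished triangle L → M → N with L ∈ 𝒫′_{m−n} and N ∈ 𝒫′ₙ. Then len_{𝒫′}(L) = len_{𝒫}(L) = m − n and len_{𝒫′}(N) = len_{𝒫}(N) = n. -/

import Mathlib

open CategoryTheory Limits Pretriangulated

universe v u

variable (C : Type u) [Category.{v} C] [Preadditive C] [HasZeroObject C] [HasShift C ℤ]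
  [∀ n : ℤ, (CategoryTheory.shiftFunctor C n).Additive] [Pretriangulated C]

/-- A projective class in a triangulated category: a class of objects `P` and an
ideal of morphisms `I` determining each other by orthogonality, such that every object
sits in a distinguished triangle `P' → X → Y → ΣP'` with `P' ∈ P` and `X → Y` in `I`. -/
structure ProjClass where
  P : Set C
  I : CategoryTheory.MorphismProperty C
  P_iff : ∀ X : C, X ∈ P ↔ ∀ ⦃Y Z : C⦄ (g : Y ⟶ Z), I g → ∀ f : X ⟶ Y, f ≫ g = 0
  I_iff : ∀ ⦃Y Z : C⦄ (g : Y ⟶ Z), I g ↔ ∀ (P' : C), P' ∈ P → ∀ f : P' ⟶ Y, f ≫ g = 0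
  exists_triangle : ∀ X : C, ∃ (P' Y : C) (f : P' ⟶ X) (g : X ⟶ Y) (h : Y ⟶ P'⟦(1 : ℤ)⟧),
    P' ∈ P ∧ I g ∧ (Triangle.mk f g h ∈ distTriang C)

variable {C}

/-- The powers of the ideal `I`: `ipow n` consists of the `n`-fold composites of maps in `I`.
`ipow 0` consists of all maps. -/
def ProjClass.ipow (pc : ProjClass C) : ℕ → CategoryTheory.MorphismProperty C
  | 0 => fun _ _ _ => True
  | n + 1 => fun X Y g => ∃ (Z : C) (g₁ : X ⟶ Z) (g₂ : Z ⟶ Y),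
      pc.I g₁ ∧ pc.ipow n g₂ ∧ g₁ ≫ g₂ = g

/-- The derived classes `𝒫ₙ`: `pcl 0` consists of the zero objects, and `X ∈ pcl (n+1)` iff
`X` is a retract of an object `M` sitting in a distinguished triangle `P → M → Q → ΣP` with
`P ∈ 𝒫` and `Q ∈ pcl n`. -/
def ProjClass.pcl (pc : ProjClass C) : ℕ → Set C
  | 0 => {X | IsZero X}
  | n + 1 => {X | ∃ (M P Q : C) (r : X ⟶ M) (s : M ⟶ X) (f : P ⟶ M) (g : M ⟶ Q)
      (h : Q ⟶ P⟦(1 : ℤ)⟧), r ≫ s = 𝟙 X ∧ P ∈ pc.P ∧ Q ∈ pc.pcl n ∧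
      (Triangle.mk f g h ∈ distTriang C)}

/-- `X` has length `n` with respect to the projective class: `n` is the least natural
number with `X ∈ 𝒫ₙ`. -/
def ProjClass.Length (pc : ProjClass C) (X : C) (n : ℕ) : Prop :=
  X ∈ pc.pcl n ∧ ∀ m : ℕ, X ∈ pc.pcl m → n ≤ m

section Aux

open ZeroObject

/-- The derived classes are monotone with respect to inclusion of projective classes. -/
lemma ProjClass.pcl_mono {pc pc' : ProjClass C} (hsub : pc'.P ⊆ pc.P) :
    ∀ (n : ℕ) {X : C}, X ∈ pc'.pcl n → X ∈ pc.pcl n := by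
  intro n
  induction n with
  | zero => intro X hX; exact hX
  | succ n IH =>
    rintro X ⟨M, P, Q, r, s, f, g, h, hrs, hP, hQ, hTr⟩
    exact ⟨M, P, Q, r, s, f, g, h, hrs, hsub hP, IH hQ, hTr⟩

/-- The derived classes are closed under retracts. -/
lemma ProjClass.pcl_retract (pc : ProjClass C) :
    ∀ (n : ℕ) {X M : C} (r : X ⟶ M) (s : M ⟶ X), r ≫ s = 𝟙 X → M ∈ pc.pcl n → X ∈ pc.pcl n := by
  intro n
  induction n with
  | zero =>
    intro X M r s hrs hM
    have hM' : Limits.IsZero M := hM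
    show Limits.IsZero X
    rw [Limits.IsZero.iff_id_eq_zero, ← hrs, hM'.eq_of_src s 0, Limits.comp_zero]
  | succ n _ =>
    rintro X M r s hrs ⟨M₁, P, Q, r₁, s₁, f, g, h, hrs₁, hP, hQ, hTr⟩
    refine ⟨M₁, P, Q, r ≫ r₁, s₁ ≫ s, f, g, h, ?_, hP, hQ, hTr⟩
    rw [Category.assoc, ← Category.assoc r₁ s₁ s, hrs₁, Category.id_comp, hrs]

/-- Orthogonality: maps out of an object of `𝒫ₙ` compose to zero with maps in `Iⁿ`. -/
lemma ProjClass.pcl_orth (pc : ProjClass C) :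
    ∀ (n : ℕ) {X : C}, X ∈ pc.pcl n → ∀ {S S' : C} (u : S ⟶ S'), pc.ipow n u →
      ∀ f : X ⟶ S, f ≫ u = 0 := by
  intro n
  induction n with
  | zero =>
    intro X hX S S' u _ f
    have hX' : Limits.IsZero X := hX
    exact hX'.eq_of_src (f ≫ u) 0
  | succ n IH =>
    rintro X ⟨M, P, Q, r, s, f₀, g₀, h₀, hrs, hP, hQ, hTr⟩ S S' u hu f
    obtain ⟨Z, u₁, u₂, hu₁, hu₂, rfl⟩ := hu
    have h1 : f₀ ≫ s ≫ f ≫ u₁ = 0 := by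
      have := (pc.P_iff P).mp hP u₁ hu₁ (f₀ ≫ s ≫ f)
      simpa only [Category.assoc] using this
    obtain ⟨w, hw⟩ := Pretriangulated.Triangle.yoneda_exact₂ _ hTr (s ≫ f ≫ u₁) h1
    change s ≫ f ≫ u₁ = g₀ ≫ w at hw
    have hwu : w ≫ u₂ = 0 := IH hQ u₂ hu₂ w
    have key : s ≫ f ≫ u₁ ≫ u₂ = 0 := by
      calc s ≫ f ≫ u₁ ≫ u₂ = (s ≫ f ≫ u₁) ≫ u₂ := by simp only [Category.assoc]
        _ = (g₀ ≫ w) ≫ u₂ := by rw [hw]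
        _ = g₀ ≫ w ≫ u₂ := Category.assoc _ _ _
        _ = 0 := (congrArg (fun t => g₀ ≫ t) hwu).trans Limits.comp_zero
    calc f ≫ u₁ ≫ u₂ = (r ≫ s) ≫ f ≫ u₁ ≫ u₂ := by rw [hrs, Category.id_comp]
      _ = r ≫ s ≫ f ≫ u₁ ≫ u₂ := by rw [Category.assoc]
      _ = 0 := by rw [key, Limits.comp_zero]

/-- Splitting of powers of the ideal. -/
lemma ProjClass.ipow_split (pc : ProjClass C) :
    ∀ (a b : ℕ) {S S' : C} (u : S ⟶ S'), pc.ipow (a + b) u →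
      ∃ (Z : C) (u₁ : S ⟶ Z) (u₂ : Z ⟶ S'), pc.ipow a u₁ ∧ pc.ipow b u₂ ∧ u₁ ≫ u₂ = u := by
  intro a
  induction a with
  | zero =>
    intro b S S' u hu
    exact ⟨S, 𝟙 S, u, trivial, by simpa using hu, Category.id_comp u⟩
  | succ a IH =>
    intro b S S' u hu
    have hu' : pc.ipow ((a + b) + 1) u := by
      rwa [show a + 1 + b = (a + b) + 1 by omega] at hu
    obtain ⟨Z, g₁, g₂, hg₁, hg₂, rfl⟩ := hu'
    obtain ⟨Z', v₁, v₂, hv₁, hv₂, rfl⟩ := IH b g₂ hg₂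
    exact ⟨Z', g₁ ≫ v₁, v₂, ⟨Z, g₁, v₁, hg₁, hv₁, rfl⟩, hv₂, by rw [Category.assoc]⟩

/-- The key resolution lemma, proved using only the pretriangulated axioms:
for every `X` and `n` there are `V ∈ 𝒫ₙ`, `ρ : V ⟶ X` and `c : X ⟶ T` in `Iⁿ` such that
every map into `X` killed by `c` factors through `ρ`. -/
lemma ProjClass.star (pc : ProjClass C) (n : ℕ) (X : C) :
    ∃ (V T : C) (ρ : V ⟶ X) (c : X ⟶ T), V ∈ pc.pcl n ∧ pc.ipow n c ∧
      ∀ (S : C) (ξ : S ⟶ X), ξ ≫ c = 0 → ∃ ξ' : S ⟶ V, ξ' ≫ ρ = ξ := by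
  induction n generalizing X with
  | zero =>
    refine ⟨0, X, 0, 𝟙 X, Limits.isZero_zero C, trivial, fun S ξ hξ => ⟨0, ?_⟩⟩
    rw [Limits.zero_comp]
    simpa using hξ.symm
  | succ n IH =>
    obtain ⟨P₀, X₁, u₀, q₀, α₀, hP₀, hq₀, hTP⟩ := pc.exists_triangle X
    obtain ⟨V', T', ρ', c', hV', hc', hlift⟩ := IH X₁
    obtain ⟨V, i, p, hTV⟩ := Pretriangulated.distinguished_cocone_triangle₂ (ρ' ≫ α₀)
    obtain ⟨ρ, hρ₁, hρ₂⟩ := Pretriangulated.complete_distinguished_triangle_morphism₂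
      (Triangle.mk i p (ρ' ≫ α₀)) (Triangle.mk u₀ q₀ α₀) hTV hTP (𝟙 P₀) ρ' (by simp; erw [CategoryTheory.Functor.map_id, Category.comp_id]; rfl)
    change V ⟶ X at ρ
    change i ≫ ρ = 𝟙 P₀ ≫ u₀ at hρ₁
    change p ≫ ρ' = ρ ≫ q₀ at hρ₂
    rw [Category.id_comp] at hρ₁
    refine ⟨V, T', ρ, q₀ ≫ c', ⟨V, P₀, V', 𝟙 V, 𝟙 V, i, p, ρ' ≫ α₀, by simp, hP₀, hV', hTV⟩,
      ⟨X₁, q₀, c', hq₀, hc', rfl⟩, ?_⟩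
    intro S ξ hξ
    obtain ⟨ξ₁, hξ₁⟩ := hlift S (ξ ≫ q₀) (by rw [Category.assoc]; exact hξ)
    have h23 : q₀ ≫ α₀ = 0 := Pretriangulated.comp_distTriang_mor_zero₂₃ _ hTP
    have hδ : ξ₁ ≫ (Triangle.mk i p (ρ' ≫ α₀)).mor₃ = 0 := by
      show ξ₁ ≫ (ρ' ≫ α₀) = 0
      rw [← Category.assoc, hξ₁, Category.assoc, h23, Limits.comp_zero]
    obtain ⟨ξ₂, hξ₂⟩ := Pretriangulated.Triangle.coyoneda_exact₃ _ hTV ξ₁ hδ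
    change S ⟶ V at ξ₂
    change ξ₁ = ξ₂ ≫ p at hξ₂
    have hq : (ξ - ξ₂ ≫ ρ) ≫ (Triangle.mk u₀ q₀ α₀).mor₂ = 0 := by
      show (ξ - ξ₂ ≫ ρ) ≫ q₀ = 0
      have hx : ξ₂ ≫ ρ ≫ q₀ = ξ ≫ q₀ := by
        rw [← hρ₂, ← Category.assoc, ← hξ₂, hξ₁]
      rw [Preadditive.sub_comp, Category.assoc, hx, sub_self]
    obtain ⟨ξ₃, hξ₃⟩ := Pretriangulated.Triangle.coyoneda_exact₂ _ hTP (ξ - ξ₂ ≫ ρ) hq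
    change S ⟶ P₀ at ξ₃
    change ξ - ξ₂ ≫ ρ = ξ₃ ≫ u₀ at hξ₃
    refine ⟨ξ₂ + ξ₃ ≫ i, ?_⟩
    rw [Preadditive.add_comp, Category.assoc, hρ₁, ← hξ₃]
    abel

/-- Converse to orthogonality: if all `n`-fold `I`-composites out of `X` vanish
then `X ∈ 𝒫ₙ`. -/
lemma ProjClass.mem_pcl_of_vanish (pc : ProjClass C) (n : ℕ) (X : C)
    (hvan : ∀ {T : C} (c : X ⟶ T), pc.ipow n c → c = 0) : X ∈ pc.pcl n := by
  obtain ⟨V, T, ρ, c, hV, hc, hlift⟩ := pc.star n X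
  obtain ⟨r, hr⟩ := hlift X (𝟙 X) (by rw [Category.id_comp, hvan c hc])
  exact pc.pcl_retract n r ρ hr hV

/-- Subadditivity of length along distinguished triangles. -/
lemma ProjClass.subadd (pc : ProjClass C) {L M N : C}
    (f : L ⟶ M) (g : M ⟶ N) (h : N ⟶ L⟦(1 : ℤ)⟧)
    (hT : Triangle.mk f g h ∈ distTriang C) {a b : ℕ}
    (hL : L ∈ pc.pcl a) (hN : N ∈ pc.pcl b) : M ∈ pc.pcl (a + b) := by
  apply pc.mem_pcl_of_vanish
  intro T c hc
  obtain ⟨Z, u₁, u₂, h1, h2, rfl⟩ := pc.ipow_split a b c hc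
  have hfu : (Triangle.mk f g h).mor₁ ≫ u₁ = 0 := pc.pcl_orth a hL u₁ h1 f
  obtain ⟨w, hw⟩ := Pretriangulated.Triangle.yoneda_exact₂ _ hT u₁ hfu
  change N ⟶ Z at w
  change u₁ = g ≫ w at hw
  rw [hw, Category.assoc, pc.pcl_orth b hN u₂ h2 w, Limits.comp_zero]

end Aux

/-- For nested projective classes `𝒫' ⊆ 𝒫`: if `M` has the same length `m` for both,
and `L → M → N → ΣL` is distinguished with `L ∈ 𝒫'_{m-n}` and `N ∈ 𝒫'ₙ`, then
`L` has length `m - n` and `N` has length `n` with respect to both classes. -/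
theorem lengths_of_nested_projective_classes (pc pc' : ProjClass C)
    (hsub : pc'.P ⊆ pc.P) {L M N : C}
    (f : L ⟶ M) (g : M ⟶ N) (h : N ⟶ L⟦(1 : ℤ)⟧)
    (hT : Triangle.mk f g h ∈ distTriang C)
    {m n : ℕ} (hnm : n ≤ m)
    (hM' : pc'.Length M m) (hM : pc.Length M m)
    (hL : L ∈ pc'.pcl (m - n)) (hN : N ∈ pc'.pcl n) :
    pc'.Length L (m - n) ∧ pc.Length L (m - n) ∧ pc'.Length N n ∧ pc.Length N n := by
  have mono := ProjClass.pcl_mono hsub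
  have lowerL : ∀ k : ℕ, L ∈ pc.pcl k → m - n ≤ k := by
    intro k hk
    have hMk : M ∈ pc.pcl (k + n) := pc.subadd f g h hT hk (mono n hN)
    have := hM.2 _ hMk
    omega
  have lowerN : ∀ k : ℕ, N ∈ pc.pcl k → n ≤ k := by
    intro k hk
    have hMk : M ∈ pc.pcl ((m - n) + k) := pc.subadd f g h hT (mono (m - n) hL) hk
    have := hM.2 _ hMk
    omega
  exact ⟨⟨hL, fun k hk => lowerL k (mono k hk)⟩, ⟨mono _ hL, lowerL⟩,
    ⟨hN, fun k hk => lowerN k (mono k hk)⟩, ⟨mono _ hN, lowerN⟩⟩
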